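/- Let q be a prime power. Let S ⊆ H_1(F_q) be the union, over all direction classes [v] in P^1(F_q), of the horizontal lines L_{0,[v]} through the origin 0 = (0, 0, 0). Then |S| = q^2, and for every [v] in P^1(F_q) the maximal function of the indicator satisfies M_{H1} 1_S([v]) ≥ q. Consequently, for every real 1 ≤ v' < ∞, ‖M_{H1} 1_S‖_{ℓ^{v'}(P^1(F_q))} ≥ q · (q + 1)^{1/v'}. -/

import Mathlib

/-!
`K` plays the role of the finite field `F_q` with `q = Fintype.card K` elements
(the cardinality of a finite field is automatically a prime power).
The Heisenberg group `H₁(F_q)` is identified with `K × K × K`.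
The projective line `P¹(F_q)` is identified with `Option K`, where `some m`
corresponds to the direction class `[1 : m]` and `none` to `[0 : 1]`
(every class has a unique such normal form).
-/

noncomputable section

open Finset

/-- Representative direction vector of a projective class. -/
def dirVec {K : Type*} [Field K] : Option K → K × K
  | some m => (1, m)
  | none => (0, 1)

/-- The point of the horizontal line through `p = (x₀, y₀, t₀)` with direction
vector `v = (a, b)` corresponding to the parameter `s`, namely
`(x₀ + s a, y₀ + s b, t₀ + s (x₀ b - y₀ a))`. -/
def hPoint {K : Type*} [Field K] (p : K × K × K) (v : K × K) (s : K) : K × K × K :=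
  (p.1 + s * v.1, p.2.1 + s * v.2, p.2.2 + s * (p.1 * v.2 - p.2.1 * v.1))

/-- Sum of `|F|` along the horizontal line through `p` with direction vector `v`. -/
def lineSumH1 {K : Type*} [Field K] [Fintype K] (Fc : K × K × K → ℂ)
    (p : K × K × K) (v : K × K) : ℝ :=
  ∑ s : K, ‖Fc (hPoint p v s)‖

/-- The horizontal Kakeya maximal function `M_{H₁} F` on `P¹(F_q) ≃ Option K`:
the maximum over all base points `p` of the sum of `|F|` along the horizontal
line through `p` in the given direction. -/
def MH1 {K : Type*} [Field K] [Fintype K] (Fc : K × K × K → ℂ) (d : Option K) : ℝ :=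
  Finset.univ.sup' ⟨((0 : K), (0 : K), (0 : K)), Finset.mem_univ _⟩
    fun p => lineSumH1 Fc p (dirVec d)

/-- `ℓ^r` norm of a complex-valued function on a finite set. -/
def lpNormC {X : Type*} [Fintype X] (r : ℝ) (g : X → ℂ) : ℝ :=
  (∑ x, ‖g x‖ ^ r) ^ (1 / r)

/-- `ℓ^r` norm of a real-valued function on a finite set. -/
def lpNormR {X : Type*} [Fintype X] (r : ℝ) (g : X → ℝ) : ℝ :=
  (∑ x, |g x| ^ r) ^ (1 / r)

/-- The union of the horizontal lines through the origin, one in each direction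
class of `P¹(F_q)`. -/
def SKak1 (K : Type*) [Field K] [Fintype K] : Set (K × K × K) :=
  { z | ∃ d : Option K, ∃ s : K, z = hPoint ((0 : K), (0 : K), (0 : K)) (dirVec d) s }


lemma SKak1_eq (K : Type*) [Field K] [Fintype K] :
    SKak1 K = (fun p : K × K => (p.1, p.2, (0 : K))) '' Set.univ := by
  ext ⟨x, y, t⟩
  simp only [SKak1, Set.mem_setOf_eq, Set.image_univ, Set.mem_range, Prod.mk.injEq]
  constructor
  · rintro ⟨d, s, h⟩
    refine ⟨(x, y), rfl, rfl, ?_⟩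
    cases d <;> simp [hPoint, dirVec, Prod.ext_iff] at h <;> exact h.2.2.symm
  · rintro ⟨⟨a, b⟩, rfl, rfl, ht⟩
    by_cases hx : a = 0
    · exact ⟨none, b, by simp [hPoint, dirVec, hx, ← ht]⟩
    · refine ⟨some (b / a), a, ?_⟩
      simp [hPoint, dirVec, ← ht]
      field_simp

lemma memS {K : Type*} [Field K] [Fintype K] (d : Option K) (s : K) :
    hPoint ((0 : K), (0 : K), (0 : K)) (dirVec d) s ∈ SKak1 K := ⟨d, s, rfl⟩

/-- The union `S` of the horizontal lines through the origin has
`|S| = q²`, `M_{H₁} 1_S ≥ q` in every direction, and hence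
`‖M_{H₁} 1_S‖_{ℓ^{v'}(P¹(F_q))} ≥ q (q+1)^{1/v'}` for all `1 ≤ v' < ∞`. -/
theorem stmt_9 (K : Type*) [Field K] [Fintype K] :
    (SKak1 K).ncard = Fintype.card K ^ 2 ∧
    (∀ d : Option K,
      (Fintype.card K : ℝ) ≤ MH1 ((SKak1 K).indicator fun _ => (1 : ℂ)) d) ∧
    ∀ v' : ℝ, 1 ≤ v' →
      (Fintype.card K : ℝ) * ((Fintype.card K : ℝ) + 1) ^ (1 / v') ≤
        lpNormR v' (MH1 ((SKak1 K).indicator fun _ => (1 : ℂ))) := by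
  have hq0 : (0 : ℝ) ≤ (Fintype.card K : ℝ) := Nat.cast_nonneg _
  have hM : ∀ d : Option K,
      (Fintype.card K : ℝ) ≤ MH1 ((SKak1 K).indicator fun _ => (1 : ℂ)) d := by
    intro d
    have h1 : lineSumH1 ((SKak1 K).indicator fun _ => (1 : ℂ))
        ((0 : K), (0 : K), (0 : K)) (dirVec d) = (Fintype.card K : ℝ) := by
      unfold lineSumH1
      rw [show ((Fintype.card K : ℝ)) = ∑ _s : K, (1 : ℝ) by simp]
      refine Finset.sum_congr rfl fun s _ => ?_
      rw [Set.indicator_of_mem (memS d s)]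
      simp
    rw [← h1]
    unfold MH1
    exact Finset.le_sup'
      (fun p => lineSumH1 ((SKak1 K).indicator fun _ => (1 : ℂ)) p (dirVec d))
      (Finset.mem_univ ((0 : K), (0 : K), (0 : K)))
  refine ⟨?_, hM, ?_⟩
  · rw [SKak1_eq]
    rw [Set.ncard_image_of_injective _ (fun p q h => by
      simpa [Prod.ext_iff] using h)]
    simp [Set.ncard_univ, Nat.card_eq_fintype_card, sq]
  · intro v' hv
    have hv0 : 0 < v' := lt_of_lt_of_le one_pos hv
    have hsum : ((Fintype.card K : ℝ) + 1) * (Fintype.card K : ℝ) ^ v' ≤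
        ∑ d : Option K, |MH1 ((SKak1 K).indicator fun _ => (1 : ℂ)) d| ^ v' := by
      have : ∀ d : Option K, (Fintype.card K : ℝ) ^ v' ≤
          |MH1 ((SKak1 K).indicator fun _ => (1 : ℂ)) d| ^ v' := by
        intro d
        exact Real.rpow_le_rpow hq0 (le_trans (hM d) (le_abs_self _)) (le_of_lt hv0)
      calc ((Fintype.card K : ℝ) + 1) * (Fintype.card K : ℝ) ^ v'
          = ∑ _d : Option K, (Fintype.card K : ℝ) ^ v' := by
            simp [Fintype.card_option]
        _ ≤ _ := Finset.sum_le_sum fun d _ => this d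
    have hcast : (((Fintype.card K : ℝ) + 1) * (Fintype.card K : ℝ) ^ v') ^ (1 / v')
        = ((Fintype.card K : ℝ) + 1) ^ (1 / v') * (Fintype.card K : ℝ) := by
      rw [Real.mul_rpow (by positivity) (by positivity),
        ← Real.rpow_mul hq0, mul_one_div, div_self (ne_of_gt hv0), Real.rpow_one]
    unfold lpNormR
    calc (Fintype.card K : ℝ) * ((Fintype.card K : ℝ) + 1) ^ (1 / v')
        = (((Fintype.card K : ℝ) + 1) * (Fintype.card K : ℝ) ^ v') ^ (1 / v') := by
          rw [hcast]; ring
      _ ≤ _ := Real.rpow_le_rpow (by positivity) hsum (by positivity)
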